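/- arXiv:0704.1955 — 5 statements merged into one kernel-verified Lean document; each statement's English description precedes it below -/
import Mathlib

section
/- Let X be a Banach space, 0 < θ < 1, and suppose x_1,…,x_N ∈ X with ‖x_j‖ ≤ 1 and functionals x*_1,…,x*_N ∈ X* with ‖x*_k‖ ≤ 1 satisfy x*_k(x_j) = θ for k < j and x*_k(x_j) = 0 for k ≥ j. Let Φ : T_n → {1,…,N} be the lexicographic enumeration of the binary tree T_n of depth n (where N = 2^{n+1}-1). Then the map f(ε) = Σ_{s ≤ ε} x_{Φ(s)} satisfies (θ/3)·ρ(ε,ε') ≤ ‖f(ε) - f(ε')‖ ≤ ρ(ε,ε') for all ε, ε' ∈ T_n. -/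
/-- Longest common prefix of two `{-1,1}`-valued sequences (modeled as `List Bool`). -/
def lcp : List Bool → List Bool → List Bool
  | a :: as, b :: bs => if a = b then a :: lcp as bs else []
  | _, _ => []

/-- The hyperbolic distance on the infinite binary tree `T`. -/
def rho (x y : List Bool) : ℕ :=
  (x.length - (lcp x y).length) + (y.length - (lcp x y).length)


lemma lcp_cons_same (a : Bool) (as bs : List Bool) : lcp (a :: as) (a :: bs) = a :: lcp as bs := by
  simp [lcp]

lemma lcp_cons_diff {a b : Bool} (h : a ≠ b) (as bs : List Bool) : lcp (a :: as) (b :: bs) = [] := by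
  simp [lcp, h]

lemma lcp_prefix_left : ∀ a b : List Bool, lcp a b <+: a
  | [], _ => by simp [lcp]
  | _ :: _, [] => by simp [lcp]
  | a :: as, b :: bs => by
    by_cases h : a = b
    · subst h
      rw [lcp_cons_same]
      simpa using lcp_prefix_left as bs
    · simp [lcp_cons_diff h]

lemma lcp_comm : ∀ a b : List Bool, lcp a b = lcp b a
  | [], [] => rfl
  | [], _ :: _ => rfl
  | _ :: _, [] => rfl
  | a :: as, b :: bs => by
    by_cases h : a = b
    · subst h; rw [lcp_cons_same, lcp_cons_same, lcp_comm as bs]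
    · rw [lcp_cons_diff h, lcp_cons_diff (Ne.symm h)]

lemma prefix_lcp : ∀ {s a b : List Bool}, s <+: a → s <+: b → s <+: lcp a b
  | [], _, _, _, _ => by simp
  | c :: s, a :: as, b :: bs, h1, h2 => by
    rw [List.cons_prefix_cons] at h1 h2
    obtain ⟨rfl, h1⟩ := h1
    obtain ⟨rfl, h2⟩ := h2
    rw [lcp_cons_same, List.cons_prefix_cons]
    exact ⟨rfl, prefix_lcp h1 h2⟩

lemma lcp_prefix_right (a b : List Bool) : lcp a b <+: b := lcp_comm a b ▸ lcp_prefix_left b a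

lemma lcp_eq_left {a b : List Bool} (h : a <+: b) : lcp a b = a :=
  (lcp_prefix_left a b).eq_of_length
    (le_antisymm (lcp_prefix_left a b).length_le (prefix_lcp List.prefix_rfl h).length_le)

lemma lcp_cases : ∀ a b : List Bool, lcp a b = a ∨ lcp a b = b ∨
    (∃ ra rb, a = lcp a b ++ (false :: ra) ∧ b = lcp a b ++ (true :: rb)) ∨
    (∃ ra rb, a = lcp a b ++ (true :: ra) ∧ b = lcp a b ++ (false :: rb))
  | [], _ => Or.inl rfl
  | _ :: _, [] => Or.inr (Or.inl rfl)
  | a :: as, b :: bs => by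
    by_cases h : a = b
    · subst h
      rw [lcp_cons_same]
      rcases lcp_cases as bs with h | h | ⟨ra, rb, h1, h2⟩ | ⟨ra, rb, h1, h2⟩
      · exact Or.inl (by rw [h])
      · exact Or.inr (Or.inl (by rw [h]))
      · exact Or.inr (Or.inr (Or.inl ⟨ra, rb, by rw [List.cons_append, ← h1], by rw [List.cons_append, ← h2]⟩))
      · exact Or.inr (Or.inr (Or.inr ⟨ra, rb, by rw [List.cons_append, ← h1], by rw [List.cons_append, ← h2]⟩))
    · rw [lcp_cons_diff h]
      rcases Bool.eq_false_or_eq_true a with ha | ha <;>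
        rcases Bool.eq_false_or_eq_true b with hb | hb <;> subst ha <;> subst hb
      · exact absurd rfl h
      · exact Or.inr (Or.inr (Or.inr ⟨as, bs, by simp, by simp⟩))
      · exact Or.inr (Or.inr (Or.inl ⟨as, bs, by simp, by simp⟩))
      · exact absurd rfl h

lemma lex_of_strict_prefix : ∀ {s t : List Bool}, s <+: t → s ≠ t → List.Lex (· < ·) s t
  | [], [], _, hne => absurd rfl hne
  | [], _ :: _, _, _ => List.Lex.nil
  | _ :: _, [], h, _ => absurd h (by simp)
  | a :: s, b :: t, h, hne => by
    rw [List.cons_prefix_cons] at h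
    obtain ⟨rfl, h2⟩ := h
    exact List.Lex.cons (lex_of_strict_prefix h2 (fun hh => hne (by rw [hh])))

lemma lex_append_lt : ∀ (δ ra rb : List Bool),
    List.Lex (· < ·) (δ ++ false :: ra) (δ ++ true :: rb)
  | [], _, _ => List.Lex.rel (by decide)
  | c :: δ, ra, rb => List.Lex.cons (lex_append_lt δ ra rb)

lemma inits_nodup : ∀ l : List Bool, l.inits.Nodup
  | [] => by simp
  | a :: l => by
    rw [List.inits_cons, List.nodup_cons]
    exact ⟨by simp, (inits_nodup l).map (fun x y h => by simpa using h)⟩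

lemma inits_toFinset_card (l : List Bool) : l.inits.toFinset.card = l.length + 1 := by
  rw [List.toFinset_card_of_nodup (inits_nodup l), List.length_inits]


lemma rho_comm (a b : List Bool) : rho a b = rho b a := by
  unfold rho; rw [lcp_comm b a]; omega

lemma inits_subset {δ ε : List Bool} (h : δ <+: ε) :
    δ.inits.toFinset ⊆ ε.inits.toFinset := by
  intro s hs
  simp only [List.mem_toFinset, List.mem_inits] at *
  exact hs.trans h

lemma card_diff {δ ε : List Bool} (h : δ <+: ε) :
    (ε.inits.toFinset \ δ.inits.toFinset).card = ε.length - δ.length := by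
  rw [Finset.card_sdiff_of_subset (inits_subset h), inits_toFinset_card, inits_toFinset_card]
  omega

lemma sum_split {X : Type*} [AddCommGroup X] (v : List Bool → X) (ε ε' : List Bool) :
    (∑ s ∈ ε.inits.toFinset, v s) - ∑ s ∈ ε'.inits.toFinset, v s
    = (∑ s ∈ ε.inits.toFinset \ (lcp ε ε').inits.toFinset, v s)
      - ∑ s ∈ ε'.inits.toFinset \ (lcp ε ε').inits.toFinset, v s := by
  rw [← Finset.sum_sdiff (inits_subset (lcp_prefix_left ε ε')),
    ← Finset.sum_sdiff (inits_subset (lcp_prefix_right ε ε'))]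
  abel

lemma bourgain_lower {X : Type*} [NormedAddCommGroup X] [NormedSpace ℝ X]
    (θ : ℝ) (hθ0 : 0 < θ) (n N : ℕ)
    (x : ℕ → X) (xs : ℕ → X →L[ℝ] ℝ) (hxs : ∀ k, 1 ≤ k → k ≤ N → ‖xs k‖ ≤ 1)
    (hθeq : ∀ k j, 1 ≤ k → j ≤ N → k < j → xs k (x j) = θ)
    (h0 : ∀ k j, 1 ≤ j → k ≤ N → j ≤ k → xs k (x j) = 0)
    (Φ : List Bool → ℕ)
    (hΦmaps : ∀ l : List Bool, l.length ≤ n → Φ l ∈ Set.Icc 1 N)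
    (hΦmono : ∀ s t : List Bool, s.length ≤ n → t.length ≤ n →
      List.Lex (· < ·) s t → Φ s < Φ t)
    (ε ε' : List Bool) (hε : ε.length ≤ n) (hε' : ε'.length ≤ n)
    (H : ∀ s, s <+: ε' → ¬ s <+: lcp ε ε' → List.Lex (· < ·) ε s) :
    (θ / 3) * (rho ε ε' : ℝ) ≤
      ‖(∑ s ∈ ε'.inits.toFinset, x (Φ s)) - ∑ s ∈ ε.inits.toFinset, x (Φ s)‖ := by
  set δ := lcp ε ε' with hδ
  have hδε : δ <+: ε := lcp_prefix_left ε ε'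
  have hδε' : δ <+: ε' := lcp_prefix_right ε ε'
  have hδn : δ.length ≤ n := le_trans hδε.length_le hε
  set a := ε.length - δ.length with haa
  set b := ε'.length - δ.length with hbb
  set A := ε.inits.toFinset \ δ.inits.toFinset with hA
  set B := ε'.inits.toFinset \ δ.inits.toFinset with hB
  have hcardA : A.card = a := card_diff hδε
  have hcardB : B.card = b := card_diff hδε'
  have hsplit : (∑ s ∈ ε'.inits.toFinset, x (Φ s)) - ∑ s ∈ ε.inits.toFinset, x (Φ s)
      = (∑ s ∈ B, x (Φ s)) - ∑ s ∈ A, x (Φ s) := by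
    rw [sum_split (fun s => x (Φ s)) ε' ε, hB, hA, hδ, lcp_comm ε ε']
  rw [hsplit]
  set w := (∑ s ∈ B, x (Φ s)) - ∑ s ∈ A, x (Φ s) with hw
  -- basic membership facts
  have hmemB : ∀ s ∈ B, s <+: ε' ∧ ¬ s <+: δ := by
    intro s hs
    simp only [hB, Finset.mem_sdiff, List.mem_toFinset, List.mem_inits] at hs
    exact hs
  have hmemA : ∀ s ∈ A, s <+: ε ∧ ¬ s <+: δ := by
    intro s hs
    simp only [hA, Finset.mem_sdiff, List.mem_toFinset, List.mem_inits] at hs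
    exact hs
  have hBn : ∀ s ∈ B, s.length ≤ n := fun s hs => le_trans (hmemB s hs).1.length_le hε'
  have hAn : ∀ s ∈ A, s.length ≤ n := fun s hs => le_trans (hmemA s hs).1.length_le hε
  have hBδ : ∀ s ∈ B, δ <+: s ∧ s ≠ δ := by
    intro s hs
    obtain ⟨h1, h2⟩ := hmemB s hs
    rcases List.prefix_or_prefix_of_prefix h1 hδε' with h | h
    · exact absurd h h2
    · exact ⟨h, fun he => h2 (he ▸ List.prefix_rfl)⟩
  have hAδ : ∀ s ∈ A, δ <+: s ∧ s ≠ δ := by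
    intro s hs
    obtain ⟨h1, h2⟩ := hmemA s hs
    rcases List.prefix_or_prefix_of_prefix h1 hδε with h | h
    · exact absurd h h2
    · exact ⟨h, fun he => h2 (he ▸ List.prefix_rfl)⟩
  set k1 := Φ ε with hk1
  set k0 := Φ δ with hk0
  obtain ⟨hk1₁, hk1N⟩ := hΦmaps ε hε
  obtain ⟨hk0₁, hk0N⟩ := hΦmaps δ hδn
  -- evaluation of xs k1 on w
  have hv1B : ∀ s ∈ B, xs k1 (x (Φ s)) = θ := by
    intro s hs
    obtain ⟨hsN₁, hsN⟩ := hΦmaps s (hBn s hs)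
    exact hθeq k1 (Φ s) hk1₁ hsN
      (hΦmono ε s hε (hBn s hs) (H s (hmemB s hs).1 (hmemB s hs).2))
  have hv1A : ∀ s ∈ A, xs k1 (x (Φ s)) = 0 := by
    intro s hs
    obtain ⟨hsN₁, hsN⟩ := hΦmaps s (hAn s hs)
    have hle : Φ s ≤ k1 := by
      rcases eq_or_ne s ε with he | he
      · rw [he]
      · exact le_of_lt (hΦmono s ε (hAn s hs) hε
          (lex_of_strict_prefix (hmemA s hs).1 he))
    exact h0 k1 (Φ s) hsN₁ hk1N hle
  have hv0B : ∀ s ∈ B, xs k0 (x (Φ s)) = θ := by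
    intro s hs
    obtain ⟨hsN₁, hsN⟩ := hΦmaps s (hBn s hs)
    obtain ⟨hp, hne⟩ := hBδ s hs
    exact hθeq k0 (Φ s) hk0₁ hsN
      (hΦmono δ s hδn (hBn s hs) (lex_of_strict_prefix hp (Ne.symm hne)))
  have hv0A : ∀ s ∈ A, xs k0 (x (Φ s)) = θ := by
    intro s hs
    obtain ⟨hsN₁, hsN⟩ := hΦmaps s (hAn s hs)
    obtain ⟨hp, hne⟩ := hAδ s hs
    exact hθeq k0 (Φ s) hk0₁ hsN
      (hΦmono δ s hδn (hAn s hs) (lex_of_strict_prefix hp (Ne.symm hne)))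
  have heval1 : xs k1 w = (b : ℝ) * θ := by
    rw [hw, map_sub, map_sum, map_sum, Finset.sum_congr rfl hv1B,
      Finset.sum_congr rfl hv1A, Finset.sum_const, Finset.sum_const, hcardA, hcardB]
    simp [nsmul_eq_mul]
  have heval0 : xs k0 w = (b : ℝ) * θ - (a : ℝ) * θ := by
    rw [hw, map_sub, map_sum, map_sum, Finset.sum_congr rfl hv0B,
      Finset.sum_congr rfl hv0A, Finset.sum_const, Finset.sum_const, hcardA, hcardB]
    simp [nsmul_eq_mul]
  -- norm bounds
  have hbnd1 : |xs k1 w| ≤ ‖w‖ := by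
    calc |xs k1 w| = ‖xs k1 w‖ := rfl
    _ ≤ ‖xs k1‖ * ‖w‖ := (xs k1).le_opNorm w
    _ ≤ 1 * ‖w‖ := mul_le_mul_of_nonneg_right (hxs k1 hk1₁ hk1N) (norm_nonneg w)
    _ = ‖w‖ := one_mul _
  have hbnd0 : |xs k0 w| ≤ ‖w‖ := by
    calc |xs k0 w| = ‖xs k0 w‖ := rfl
    _ ≤ ‖xs k0‖ * ‖w‖ := (xs k0).le_opNorm w
    _ ≤ 1 * ‖w‖ := mul_le_mul_of_nonneg_right (hxs k0 hk0₁ hk0N) (norm_nonneg w)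
    _ = ‖w‖ := one_mul _
  have hb : (b : ℝ) * θ ≤ ‖w‖ := by
    calc (b : ℝ) * θ = xs k1 w := heval1.symm
    _ ≤ |xs k1 w| := le_abs_self _
    _ ≤ ‖w‖ := hbnd1
  have ha : (a : ℝ) * θ ≤ 2 * ‖w‖ := by
    have : (a : ℝ) * θ = xs k1 w - xs k0 w := by rw [heval1, heval0]; ring
    rw [this]
    calc xs k1 w - xs k0 w ≤ |xs k1 w| + |xs k0 w| := by
          have := abs_sub_abs_le_abs_sub (xs k1 w) (xs k0 w)
          have h2 := abs_sub (xs k1 w) (xs k0 w)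
          linarith [le_abs_self (xs k1 w - xs k0 w), abs_sub_le_iff.mp (le_refl |xs k1 w - xs k0 w|),
            le_abs_self (xs k1 w), neg_abs_le (xs k0 w), le_abs_self (xs k0 w), neg_abs_le (xs k1 w)]
    _ ≤ ‖w‖ + ‖w‖ := add_le_add hbnd1 hbnd0
    _ = 2 * ‖w‖ := by ring
  have hrho : (rho ε ε' : ℝ) = (a : ℝ) + (b : ℝ) := by
    rw [show rho ε ε' = a + b from rfl]; push_cast; ring
  rw [hrho]
  have han : (0:ℝ) ≤ a := Nat.cast_nonneg a
  have hbn : (0:ℝ) ≤ b := Nat.cast_nonneg b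
  rcases le_total ((a : ℝ)) (2 * (b : ℝ)) with hc | hc
  · nlinarith
  · nlinarith

/-- Bourgain's embedding of the binary tree `T_n` of depth `n` into a Banach space:
given James-type vectors and functionals and the lexicographic enumeration `Φ` of `T_n`
(characterized as the strictly monotone bijection onto `{1,…,2^{n+1}-1}` for the
lexicographic order), the map `f(ε) = ∑_{s ≤ ε} x_{Φ(s)}` has distortion at most `3/θ`. -/
theorem bourgain_tree_embedding
    {X : Type*} [NormedAddCommGroup X] [NormedSpace ℝ X] [CompleteSpace X]
    (θ : ℝ) (hθ0 : 0 < θ) (hθ1 : θ < 1) (n N : ℕ) (hN : N = 2 ^ (n + 1) - 1)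
    (x : ℕ → X) (hx : ∀ j, 1 ≤ j → j ≤ N → ‖x j‖ ≤ 1)
    (xs : ℕ → X →L[ℝ] ℝ) (hxs : ∀ k, 1 ≤ k → k ≤ N → ‖xs k‖ ≤ 1)
    (hθeq : ∀ k j, 1 ≤ k → j ≤ N → k < j → xs k (x j) = θ)
    (h0 : ∀ k j, 1 ≤ j → k ≤ N → j ≤ k → xs k (x j) = 0)
    (Φ : List Bool → ℕ)
    (hΦbij : Set.BijOn Φ {l : List Bool | l.length ≤ n} (Set.Icc 1 N))
    (hΦmono : ∀ s t : List Bool, s.length ≤ n → t.length ≤ n →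
      List.Lex (· < ·) s t → Φ s < Φ t) :
    ∀ ε ε' : List Bool, ε.length ≤ n → ε'.length ≤ n →
      (θ / 3) * (rho ε ε' : ℝ) ≤
        ‖(∑ s ∈ ε.inits.toFinset, x (Φ s)) - ∑ s ∈ ε'.inits.toFinset, x (Φ s)‖ ∧
      ‖(∑ s ∈ ε.inits.toFinset, x (Φ s)) - ∑ s ∈ ε'.inits.toFinset, x (Φ s)‖ ≤
        (rho ε ε' : ℝ) := by
  have hΦmaps : ∀ l : List Bool, l.length ≤ n → Φ l ∈ Set.Icc 1 N :=
    fun l hl => hΦbij.mapsTo hl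
  intro ε ε' hε hε'
  constructor
  · -- lower bound
    -- establish the ordering disjunction
    have Hor : (∀ s, s <+: ε' → ¬ s <+: lcp ε ε' → List.Lex (· < ·) ε s) ∨
        (∀ s, s <+: ε → ¬ s <+: lcp ε' ε → List.Lex (· < ·) ε' s) := by
      rcases lcp_cases ε ε' with h | h | ⟨ra, rb, h1, h2⟩ | ⟨ra, rb, h1, h2⟩
      · -- lcp = ε, i.e. ε <+: ε'
        left
        intro s hs hns
        rw [h] at hns
        have hεε' : ε <+: ε' := h ▸ lcp_prefix_right ε ε'
        rcases List.prefix_or_prefix_of_prefix hs hεε' with hc | hc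
        · exact absurd hc hns
        · exact lex_of_strict_prefix hc (by rintro rfl; exact hns List.prefix_rfl)
      · -- lcp = ε', i.e. ε' <+: ε
        right
        intro s hs hns
        rw [lcp_comm ε' ε, h] at hns
        have hε'ε : ε' <+: ε := h ▸ lcp_prefix_left ε ε'
        rcases List.prefix_or_prefix_of_prefix hs hε'ε with hc | hc
        · exact absurd hc hns
        · exact lex_of_strict_prefix hc (by rintro rfl; exact hns List.prefix_rfl)
      · -- ε continues with false, ε' with true
        left
        intro s hs hns
        set δ := lcp ε ε' with hδ
        have hδε' : δ <+: ε' := lcp_prefix_right ε ε'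
        have hδs : δ <+: s := by
          rcases List.prefix_or_prefix_of_prefix hs hδε' with hc | hc
          · exact absurd hc hns
          · exact hc
        obtain ⟨u, hu⟩ := hδs
        have hune : u ≠ [] := by
          rintro rfl
          exact hns (by rw [← hu, List.append_nil])
        rcases u with _ | ⟨c, u'⟩
        · exact absurd rfl hune
        · have hsp : δ ++ c :: u' <+: δ ++ true :: rb := by
            rw [hu, ← h2]; exact hs
          rw [List.prefix_append_right_inj, List.cons_prefix_cons] at hsp
          rw [← hu, hsp.1, h1]
          exact lex_append_lt δ ra u'
      · -- ε continues with true, ε' with false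
        right
        intro s hs hns
        rw [lcp_comm ε' ε] at hns
        set δ := lcp ε ε' with hδ
        have hδε : δ <+: ε := lcp_prefix_left ε ε'
        have hδs : δ <+: s := by
          rcases List.prefix_or_prefix_of_prefix hs hδε with hc | hc
          · exact absurd hc hns
          · exact hc
        obtain ⟨u, hu⟩ := hδs
        have hune : u ≠ [] := by
          rintro rfl
          exact hns (by rw [← hu, List.append_nil])
        rcases u with _ | ⟨c, u'⟩
        · exact absurd rfl hune
        · have hsp : δ ++ c :: u' <+: δ ++ true :: ra := by
            rw [hu, ← h1]; exact hs
          rw [List.prefix_append_right_inj, List.cons_prefix_cons] at hsp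
          rw [← hu, hsp.1, h2]
          exact lex_append_lt δ rb u'
    rcases Hor with H | H
    · rw [norm_sub_rev]
      exact bourgain_lower θ hθ0 n N x xs hxs hθeq h0 Φ hΦmaps hΦmono ε ε' hε hε' H
    · rw [rho_comm]
      exact bourgain_lower θ hθ0 n N x xs hxs hθeq h0 Φ hΦmaps hΦmono ε' ε hε' hε H
  · -- upper bound
    rw [sum_split (fun s => x (Φ s)) ε ε']
    have hb1 : ∀ s ∈ ε.inits.toFinset \ (lcp ε ε').inits.toFinset, ‖x (Φ s)‖ ≤ 1 := by
      intro s hs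
      simp only [Finset.mem_sdiff, List.mem_toFinset, List.mem_inits] at hs
      obtain ⟨h1N, h2N⟩ := hΦmaps s (le_trans hs.1.length_le hε)
      exact hx _ h1N h2N
    have hb2 : ∀ s ∈ ε'.inits.toFinset \ (lcp ε ε').inits.toFinset, ‖x (Φ s)‖ ≤ 1 := by
      intro s hs
      simp only [Finset.mem_sdiff, List.mem_toFinset, List.mem_inits] at hs
      obtain ⟨h1N, h2N⟩ := hΦmaps s (le_trans hs.1.length_le hε')
      exact hx _ h1N h2N
    have hrho : (rho ε ε' : ℝ) = ((ε.length - (lcp ε ε').length : ℕ) : ℝ)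
        + ((ε'.length - (lcp ε ε').length : ℕ) : ℝ) := by
      rw [show rho ε ε' = (ε.length - (lcp ε ε').length) + (ε'.length - (lcp ε ε').length) from rfl]
      push_cast; ring
    rw [hrho]
    calc ‖(∑ s ∈ ε.inits.toFinset \ (lcp ε ε').inits.toFinset, x (Φ s))
        - ∑ s ∈ ε'.inits.toFinset \ (lcp ε ε').inits.toFinset, x (Φ s)‖
        ≤ ‖∑ s ∈ ε.inits.toFinset \ (lcp ε ε').inits.toFinset, x (Φ s)‖
          + ‖∑ s ∈ ε'.inits.toFinset \ (lcp ε ε').inits.toFinset, x (Φ s)‖ := norm_sub_le _ _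
      _ ≤ (∑ s ∈ ε.inits.toFinset \ (lcp ε ε').inits.toFinset, ‖x (Φ s)‖)
          + ∑ s ∈ ε'.inits.toFinset \ (lcp ε ε').inits.toFinset, ‖x (Φ s)‖ :=
          add_le_add (norm_sum_le _ _) (norm_sum_le _ _)
      _ ≤ ((ε.inits.toFinset \ (lcp ε ε').inits.toFinset).card : ℝ) * 1
          + ((ε'.inits.toFinset \ (lcp ε ε').inits.toFinset).card : ℝ) * 1 :=
          add_le_add (Finset.sum_le_card_nsmul _ _ 1 hb1 |>.trans_eq (by simp [nsmul_eq_mul]))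
            (Finset.sum_le_card_nsmul _ _ 1 hb2 |>.trans_eq (by simp [nsmul_eq_mul]))
      _ = ((ε.length - (lcp ε ε').length : ℕ) : ℝ)
          + ((ε'.length - (lcp ε ε').length : ℕ) : ℝ) := by
          rw [card_diff (lcp_prefix_left ε ε'), card_diff (lcp_prefix_right ε ε')]
          ring
end

section
/- Let Z be a Banach space with closed subspaces (F_i)_{i≥0} forming a Schauder finite dimensional decomposition, and suppose the projection from F_0 ⊕ … ⊕ F_q onto F_0 ⊕ … ⊕ F_p along F_{p+1} ⊕ … ⊕ F_q has norm at most ∏_{i=p}^{q-1}(1+ε_i) for all p < q, where ε_i > 0 and ∏_{i≥0}(1+ε_i) ≤ 2. Then the projection P_n from the closed span of ⋃_i F_i onto F_0 ⊕ … ⊕ F_n with kernel the closed span of ⋃_{i>n} F_i satisfies ‖P_n‖ ≤ ∏_{i≥n}(1+ε_i) ≤ 2, and the coordinate projections Π_0 = P_0 and Π_n = P_n - P_{n-1} (n ≥ 1) satisfy ‖Π_n‖ ≤ 4. -/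
open Filter Finset

lemma aux_prod_mono {f : ℕ → ℝ} (h1 : ∀ i, 1 ≤ f i) {s t : Finset ℕ} (hst : s ⊆ t) :
    ∏ i ∈ s, f i ≤ ∏ i ∈ t, f i := by
  rw [← Finset.prod_sdiff hst]
  have hs : 0 ≤ ∏ i ∈ s, f i := Finset.prod_nonneg fun i _ => le_trans zero_le_one (h1 i)
  have ht : 1 ≤ ∏ i ∈ t \ s, f i := by
    have := Finset.prod_le_prod (s := t \ s) (f := fun _ => (1:ℝ)) (g := f)
      (by intros; norm_num) (fun i _ => h1 i)
    simpa using this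
  exact le_mul_of_one_le_left hs ht

lemma mult_aux {e : ℕ → ℝ} (he : ∀ i, 0 < e i)
    (hprod : ∀ n, ∏ i ∈ Finset.range n, (1 + e i) ≤ 2) (n : ℕ) :
    ∃ L : ℝ, HasProd (fun i => (1 + e (n + i))) L ∧
      ∀ s : Finset ℕ, ∏ i ∈ s, (1 + e (n + i)) ≤ L := by
  set f : ℕ → ℝ := fun i => 1 + e (n + i) with hf
  have h1 : ∀ i, (1:ℝ) ≤ f i := fun i => by simp only [hf]; linarith [(he (n+i))]
  have hmono : Monotone (fun s : Finset ℕ => ∏ i ∈ s, f i) :=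
    fun s t hst => aux_prod_mono h1 hst
  have hbdd : BddAbove (Set.range (fun s : Finset ℕ => ∏ i ∈ s, f i)) := by
    refine ⟨2, ?_⟩
    rintro _ ⟨s, rfl⟩
    rcases s.eq_empty_or_nonempty with rfl | hs
    · simp only [Finset.prod_empty]; norm_num
    · obtain ⟨m, hm⟩ := s.exists_le
      calc ∏ i ∈ s, f i ≤ ∏ i ∈ Finset.range (m+1), f i :=
            hmono (fun i hi => Finset.mem_range.mpr ((hm i hi).trans_lt (Nat.lt_succ_self m)))
        _ = ∏ i ∈ Finset.Ico n (n + (m+1)), (1 + e i) := by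
            rw [Finset.prod_Ico_eq_prod_range]; simp [hf]
        _ ≤ ∏ i ∈ Finset.range (n + (m+1)), (1 + e i) := by
            refine aux_prod_mono (fun i => by linarith [(he i)]) ?_
            intro i hi
            simp only [Finset.mem_Ico] at hi
            exact Finset.mem_range.mpr hi.2
        _ ≤ 2 := hprod _
  exact ⟨_, tendsto_atTop_ciSup hmono hbdd, fun s => le_ciSup hbdd s⟩

/-- Bounds on the projections associated with a Schauder finite dimensional decomposition:
if the finite-rank projections onto `F_0 ⊕ … ⊕ F_p` inside `F_0 ⊕ … ⊕ F_q` have norm at most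
`∏_{i=p}^{q-1}(1+ε_i)` with `∏(1+ε_i) ≤ 2`, then the decomposition projections `P_n` satisfy
`‖P_n z‖ ≤ (∏_{i≥n}(1+ε_i))‖z‖ ≤ 2‖z‖` and the coordinate projections satisfy
`‖Π_n z‖ ≤ 4‖z‖`. -/
theorem fdd_projection_bounds
    {Z : Type*} [NormedAddCommGroup Z] [NormedSpace ℝ Z] [CompleteSpace Z]
    (F : ℕ → Submodule ℝ Z) (hfin : ∀ i, FiniteDimensional ℝ (F i))
    (hFDD : ∀ z : Z, ∃! x : (i : ℕ) → F i,
      Filter.Tendsto (fun n => ∑ i ∈ Finset.range n, (x i : Z)) Filter.atTop (nhds z))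
    (e : ℕ → ℝ) (he : ∀ i, 0 < e i)
    (hprod : ∀ n, ∏ i ∈ Finset.range n, (1 + e i) ≤ 2)
    (hproj : ∀ p q : ℕ, p < q → ∀ x : (i : ℕ) → F i,
      ‖∑ i ∈ Finset.range (p + 1), (x i : Z)‖ ≤
        (∏ i ∈ Finset.Icc p (q - 1), (1 + e i)) * ‖∑ i ∈ Finset.range (q + 1), (x i : Z)‖) :
    ∀ (z : Z) (x : (i : ℕ) → F i),
      Filter.Tendsto (fun n => ∑ i ∈ Finset.range n, (x i : Z)) Filter.atTop (nhds z) →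
      (∀ n, ‖∑ i ∈ Finset.range (n + 1), (x i : Z)‖ ≤ (∏' i : ℕ, (1 + e (n + i))) * ‖z‖) ∧
      (∀ n, ‖∑ i ∈ Finset.range (n + 1), (x i : Z)‖ ≤ 2 * ‖z‖) ∧
      (∀ n, ‖(x n : Z)‖ ≤ 4 * ‖z‖) := by
  intro z x hx
  set S : ℕ → Z := fun m => ∑ i ∈ Finset.range m, (x i : Z) with hS
  have hSz : Tendsto (fun q => ‖S (q + 1)‖) atTop (nhds ‖z‖) :=
    ((hx.comp (tendsto_add_atTop_nat 1)).norm)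
  -- partial products bounded by 2
  have hP2 : ∀ n q : ℕ, n < q → ∏ i ∈ Finset.Icc n (q - 1), (1 + e i) ≤ 2 := by
    intro n q hq
    calc ∏ i ∈ Finset.Icc n (q-1), (1 + e i) ≤ ∏ i ∈ Finset.range q, (1 + e i) := by
          refine aux_prod_mono (fun i => by linarith [(he i)]) ?_
          intro i hi
          simp only [Finset.mem_Icc] at hi
          exact Finset.mem_range.mpr (by omega)
      _ ≤ 2 := hprod q
  -- part 2 first
  have part2 : ∀ n, ‖S (n + 1)‖ ≤ 2 * ‖z‖ := by
    intro n
    refine ge_of_tendsto (hSz.const_mul 2) ?_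
    filter_upwards [eventually_gt_atTop n] with q hq
    calc ‖S (n+1)‖ ≤ (∏ i ∈ Finset.Icc n (q-1), (1 + e i)) * ‖S (q+1)‖ := hproj n q hq x
      _ ≤ 2 * ‖S (q+1)‖ := mul_le_mul_of_nonneg_right (hP2 n q hq) (norm_nonneg _)
  have part1 : ∀ n, ‖S (n + 1)‖ ≤ (∏' i : ℕ, (1 + e (n + i))) * ‖z‖ := by
    intro n
    obtain ⟨L, hL, hLe⟩ := mult_aux he hprod n
    have htp : (∏' i : ℕ, (1 + e (n + i))) = L := hL.tprod_eq
    have hPT : ∀ q, n < q → ∏ i ∈ Finset.Icc n (q-1), (1 + e i) ≤ ∏' i : ℕ, (1 + e (n + i)) := by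
      intro q hq
      have h1 : Finset.Icc n (q-1) = Finset.Ico n q := by
        ext i; simp only [Finset.mem_Icc, Finset.mem_Ico]; omega
      rw [h1, Finset.prod_Ico_eq_prod_range, htp]
      exact hLe _
    refine ge_of_tendsto (hSz.const_mul _) ?_
    filter_upwards [eventually_gt_atTop n] with q hq
    calc ‖S (n+1)‖ ≤ (∏ i ∈ Finset.Icc n (q-1), (1 + e i)) * ‖S (q+1)‖ := hproj n q hq x
      _ ≤ (∏' i : ℕ, (1 + e (n + i))) * ‖S (q+1)‖ :=
        mul_le_mul_of_nonneg_right (hPT q hq) (norm_nonneg _)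
  refine ⟨part1, part2, ?_⟩
  intro n
  have hx' : (x n : Z) = S (n+1) - S n := by
    simp only [hS, Finset.sum_range_succ]; abel
  match n with
  | 0 =>
    have h0 : S 0 = 0 := by simp [hS]
    rw [hx', h0, sub_zero]
    linarith [part2 0, norm_nonneg z]
  | Nat.succ m =>
    rw [hx']
    calc ‖S (m+1+1) - S (m+1)‖ ≤ ‖S (m+1+1)‖ + ‖S (m+1)‖ := norm_sub_le _ _
      _ ≤ 2*‖z‖ + 2*‖z‖ := add_le_add (part2 (m+1)) (part2 m)
      _ = 4*‖z‖ := by ring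
end

section
/- For all ε, ε' in the infinite binary tree T and all p ∈ [1,∞), d_p(ε,ε')^p ≤ 2^p · ρ(ε,ε'), and d_p(ε,ε')^p ≥ | |ε| - |ε'| |. -/
/-- The `i`-th coordinate of `ε ∈ T ⊆ ℓ_p`: `±1` for `i < |ε|` (with `true ↦ 1`,
`false ↦ -1`), and `0` beyond the length of `ε`. -/
def coord (ε : List Bool) (i : ℕ) : ℝ :=
  if h : i < ε.length then (if ε.get ⟨i, h⟩ then 1 else -1) else 0

/-- The metric `d_p` on the infinite binary tree `T`, induced by the `ℓ_p` norm:
`d_p(ε,ε') = (∑_i |ε_i - ε'_i|^p)^{1/p}`. -/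
noncomputable def dp (p : ℝ) (ε ε' : List Bool) : ℝ :=
  (∑ i ∈ Finset.range (max ε.length ε'.length), |coord ε i - coord ε' i| ^ p) ^ (1 / p)

lemma lcp_le_left : ∀ x y : List Bool, (lcp x y).length ≤ x.length
  | [], _ => by simp [lcp]
  | _ :: _, [] => by simp [lcp]
  | a :: as, b :: bs => by
    by_cases h : a = b <;> simp [lcp, h]
    exact lcp_le_left as bs

lemma lcp_le_right : ∀ x y : List Bool, (lcp x y).length ≤ y.length
  | [], _ => by simp [lcp]
  | _ :: _, [] => by simp [lcp]
  | a :: as, b :: bs => by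
    by_cases h : a = b <;> simp [lcp, h]
    exact lcp_le_right as bs

lemma coord_cons (a : Bool) (as : List Bool) (j : ℕ) :
    coord (a :: as) (j + 1) = coord as j := by
  simp [coord, Nat.succ_lt_succ_iff]

lemma coord_lcp : ∀ (x y : List Bool) (i : ℕ), i < (lcp x y).length → coord x i = coord y i
  | [], y, i, h => by simp [lcp] at h
  | _ :: _, [], i, h => by simp [lcp] at h
  | a :: as, b :: bs, i, h => by
    by_cases hab : a = b
    · subst hab
      simp [lcp] at h
      cases i with
      | zero => simp [coord]
      | succ j =>
        rw [coord_cons, coord_cons]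
        exact coord_lcp as bs j (by omega)
    · simp [lcp, hab] at h

lemma coord_eq_zero {x : List Bool} {i : ℕ} (h : x.length ≤ i) : coord x i = 0 := by
  simp [coord, Nat.not_lt.mpr h]

lemma abs_coord_le (x : List Bool) (i : ℕ) : |coord x i| ≤ 1 := by
  unfold coord
  split
  · split <;> norm_num
  · norm_num

lemma abs_coord_eq_one {x : List Bool} {i : ℕ} (h : i < x.length) : |coord x i| = 1 := by
  unfold coord
  rw [dif_pos h]
  split <;> norm_num

/-- Comparison between `d_p` and the hyperbolic metric `ρ`:
`d_p(ε,ε')^p ≤ 2^p ρ(ε,ε')` and `d_p(ε,ε')^p ≥ ||ε| - |ε'||`. -/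
theorem dp_pow_compare_rho (p : ℝ) (hp : 1 ≤ p) (ε ε' : List Bool) :
    (dp p ε ε') ^ p ≤ (2 : ℝ) ^ p * (rho ε ε' : ℝ) ∧
    |(ε.length : ℝ) - (ε'.length : ℝ)| ≤ (dp p ε ε') ^ p := by
  set a := ε.length with ha
  set b := ε'.length with hb
  set l := (lcp ε ε').length with hl
  have hla : l ≤ a := lcp_le_left ε ε'
  have hlb : l ≤ b := lcp_le_right ε ε'
  have hp0 : (0:ℝ) < p := lt_of_lt_of_le one_pos hp
  set t : ℕ → ℝ := fun i => |coord ε i - coord ε' i| ^ p with ht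
  have htnn : ∀ i, 0 ≤ t i := fun i => Real.rpow_nonneg (abs_nonneg _) p
  set S : ℝ := ∑ i ∈ Finset.range (max a b), t i with hS
  have hSnn : 0 ≤ S := Finset.sum_nonneg fun i _ => htnn i
  have hdp : (dp p ε ε') ^ p = S := by
    rw [dp]
    show (S ^ (1 / p)) ^ p = S
    rw [← Real.rpow_mul hSnn, one_div_mul_cancel (ne_of_gt hp0), Real.rpow_one]
  constructor
  · -- upper bound
    rw [hdp]
    have hsplit : S = ∑ i ∈ Finset.Ico 0 l, t i + ∑ i ∈ Finset.Ico l (max a b), t i := by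
      rw [hS, Finset.range_eq_Ico, ← Finset.sum_Ico_consecutive _ (Nat.zero_le l)
        (le_trans hla (le_max_left a b))]
    have h1 : ∑ i ∈ Finset.Ico 0 l, t i = 0 := by
      apply Finset.sum_eq_zero
      intro i hi
      simp only [Finset.mem_Ico] at hi
      rw [ht]
      simp only
      rw [coord_lcp ε ε' i hi.2, sub_self, abs_zero]
      exact Real.zero_rpow (ne_of_gt hp0)
    have h2 : ∑ i ∈ Finset.Ico l (max a b), t i ≤ (max a b - l : ℕ) * (2:ℝ) ^ p := by
      calc ∑ i ∈ Finset.Ico l (max a b), t i ≤ ∑ _i ∈ Finset.Ico l (max a b), (2:ℝ) ^ p := by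
            apply Finset.sum_le_sum
            intro i _
            apply Real.rpow_le_rpow (abs_nonneg _) _ (le_of_lt hp0)
            calc |coord ε i - coord ε' i| ≤ |coord ε i| + |coord ε' i| := abs_sub _ _
              _ ≤ 1 + 1 := add_le_add (abs_coord_le ε i) (abs_coord_le ε' i)
              _ = 2 := by norm_num
        _ = (max a b - l : ℕ) * (2:ℝ) ^ p := by
            rw [Finset.sum_const, Nat.card_Ico, nsmul_eq_mul]
    have hcard : ((max a b - l : ℕ) : ℝ) ≤ (rho ε ε' : ℝ) := by
      have : (max a b - l : ℕ) ≤ rho ε ε' := by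
        rw [rho]; omega
      exact_mod_cast this
    calc S = ∑ i ∈ Finset.Ico l (max a b), t i := by rw [hsplit, h1, zero_add]
      _ ≤ (max a b - l : ℕ) * (2:ℝ) ^ p := h2
      _ ≤ (rho ε ε' : ℝ) * (2:ℝ) ^ p := by
          apply mul_le_mul_of_nonneg_right hcard (Real.rpow_nonneg (by norm_num) p)
      _ = (2:ℝ) ^ p * (rho ε ε' : ℝ) := mul_comm _ _
  · -- lower bound
    rw [hdp]
    have hsub : Finset.Ico (min a b) (max a b) ⊆ Finset.range (max a b) := by
      rw [Finset.range_eq_Ico]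
      exact Finset.Ico_subset_Ico (Nat.zero_le _) le_rfl
    have hterm : ∀ i ∈ Finset.Ico (min a b) (max a b), t i = 1 := by
      intro i hi
      simp only [Finset.mem_Ico] at hi
      have habs : |coord ε i - coord ε' i| = 1 := by
        rcases le_total a b with hab | hab
        · have h1 : a ≤ i := by omega
          have h2 : i < b := by omega
          rw [coord_eq_zero h1, zero_sub, abs_neg]
          exact abs_coord_eq_one h2
        · have h1 : b ≤ i := by omega
          have h2 : i < a := by omega
          rw [coord_eq_zero h1, sub_zero]
          exact abs_coord_eq_one h2
      rw [ht]; simp only; rw [habs, Real.one_rpow]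
    have h3 : ((max a b - min a b : ℕ) : ℝ) ≤ S := by
      calc ((max a b - min a b : ℕ) : ℝ) = ∑ i ∈ Finset.Ico (min a b) (max a b), t i := by
            rw [Finset.sum_congr rfl hterm, Finset.sum_const, Nat.card_Ico, nsmul_eq_mul, mul_one]
        _ ≤ S := Finset.sum_le_sum_of_subset_of_nonneg hsub (fun i _ _ => htnn i)
    have : |(a : ℝ) - (b : ℝ)| = ((max a b - min a b : ℕ) : ℝ) := by
      rcases le_total a b with hab | hab
      · have hab' : (a:ℝ) ≤ (b:ℝ) := Nat.cast_le.mpr hab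
        rw [abs_of_nonpos (sub_nonpos.mpr hab'), max_eq_right hab,
          min_eq_left hab, Nat.cast_sub hab]
        ring
      · have hab' : (b:ℝ) ≤ (a:ℝ) := Nat.cast_le.mpr hab
        rw [abs_of_nonneg (sub_nonneg.mpr hab'), max_eq_left hab,
          min_eq_right hab, Nat.cast_sub hab]
    rw [this]
    exact h3
end

section
/- Let X be a Banach space, p ∈ [1,∞), and (f_m)_{m≥0} maps from T to X such that for every m and ε ∈ T, ‖f_m(ε)‖ ≤ |ε|^{1/p}, and each f_m is 1-Lipschitz from (T, d_p) to X. Define f : T → X by f(ε) = λ f_m(ε) + (1-λ) f_{m+1}(ε) when 2^m ≤ |ε| < 2^{m+1}, with λ = (2^{m+1} - |ε|)/2^m, and f(∅) = 0. Then f is 9-Lipschitz from (T, d_p) to X. -/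
private lemma dp_nonneg' (p : ℝ) (ε ε' : List Bool) : 0 ≤ dp p ε ε' :=
  Real.rpow_nonneg (Finset.sum_nonneg fun i _ => Real.rpow_nonneg (abs_nonneg _) p) _

private lemma dp_symm' (p : ℝ) (ε ε' : List Bool) : dp p ε ε' = dp p ε' ε := by
  unfold dp
  rw [max_comm]
  congr 1
  exact Finset.sum_congr rfl fun i _ => by rw [abs_sub_comm]

private lemma dp_length_le' (p : ℝ) (hp : 1 ≤ p) (ε ε' : List Bool)
    (h : ε.length ≤ ε'.length) :
    ((ε'.length : ℝ) - ε.length) ≤ dp p ε ε' ^ p := by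
  have hp0 : (0:ℝ) < p := lt_of_lt_of_le one_pos hp
  have hS : 0 ≤ ∑ i ∈ Finset.range (max ε.length ε'.length), |coord ε i - coord ε' i| ^ p :=
    Finset.sum_nonneg fun i _ => Real.rpow_nonneg (abs_nonneg _) p
  have hdp : dp p ε ε' ^ p = ∑ i ∈ Finset.range (max ε.length ε'.length),
      |coord ε i - coord ε' i| ^ p := by
    rw [dp, one_div, Real.rpow_inv_rpow hS hp0.ne']
  rw [hdp, max_eq_right h]
  calc ((ε'.length : ℝ) - ε.length)
      = ∑ _i ∈ Finset.Ico ε.length ε'.length, (1:ℝ) := by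
        rw [Finset.sum_const, Nat.card_Ico, nsmul_eq_mul, mul_one, Nat.cast_sub h]
    _ = ∑ i ∈ Finset.Ico ε.length ε'.length, |coord ε i - coord ε' i| ^ p := by
        apply Finset.sum_congr rfl
        intro i hi
        rw [Finset.mem_Ico] at hi
        have h1 : coord ε i = 0 := by rw [coord, dif_neg (not_lt.mpr hi.1)]
        have h2 : |coord ε' i| = 1 := by
          rw [coord, dif_pos hi.2]
          split <;> norm_num
        rw [h1, zero_sub, abs_neg, h2, Real.one_rpow]
    _ ≤ ∑ i ∈ Finset.range ε'.length, |coord ε i - coord ε' i| ^ p := by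
        apply Finset.sum_le_sum_of_subset_of_nonneg
        · intro i hi; rw [Finset.mem_Ico] at hi; exact Finset.mem_range.mpr hi.2
        · intro i _ _; exact Real.rpow_nonneg (abs_nonneg _) _

private lemma key_min' (p A D t : ℝ) (hp : 1 ≤ p) (hA : 0 < A) (hD : 0 ≤ D)
    (ht0 : 0 ≤ t) (ht1 : t ≤ 1) (ht : t * A ≤ D ^ p) :
    t * (2 * A) ^ (1 / p) ≤ 2 * D := by
  have hp0 : (0:ℝ) < p := lt_of_lt_of_le one_pos hp
  have h2A : (0:ℝ) ≤ 2 * A := by linarith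
  have hL0 : 0 ≤ t * (2 * A) ^ (1 / p) := mul_nonneg ht0 (Real.rpow_nonneg h2A _)
  have hpow : (t * (2 * A) ^ (1 / p)) ^ p ≤ (2 * D) ^ p := by
    rw [Real.mul_rpow ht0 (Real.rpow_nonneg h2A _), one_div,
      Real.rpow_inv_rpow h2A hp0.ne']
    have htp : t ^ p ≤ t := by
      rcases eq_or_lt_of_le ht0 with h | h
      · rw [← h, Real.zero_rpow hp0.ne']
      · calc t ^ p ≤ t ^ (1:ℝ) := Real.rpow_le_rpow_of_exponent_ge h ht1 hp
          _ = t := Real.rpow_one t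
    have h2p : (2:ℝ) ≤ 2 ^ p := by
      calc (2:ℝ) = 2 ^ (1:ℝ) := (Real.rpow_one 2).symm
        _ ≤ 2 ^ p := Real.rpow_le_rpow_of_exponent_le one_le_two hp
    have hDp : 0 ≤ D ^ p := Real.rpow_nonneg hD p
    calc t ^ p * (2 * A) ≤ t * (2 * A) :=
          mul_le_mul_of_nonneg_right htp h2A
      _ = 2 * (t * A) := by ring
      _ ≤ 2 * D ^ p := by linarith
      _ ≤ 2 ^ p * D ^ p := by nlinarith
      _ = (2 * D) ^ p := (Real.mul_rpow (by norm_num) hD).symm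
  rw [one_div] at hL0 ⊢
  calc t * (2 * A) ^ p⁻¹
      = ((t * (2 * A) ^ p⁻¹) ^ p) ^ p⁻¹ := by
        rw [Real.rpow_rpow_inv hL0 hp0.ne']
    _ ≤ ((2 * D) ^ p) ^ p⁻¹ := by
        apply Real.rpow_le_rpow (Real.rpow_nonneg hL0 p) ?_ (by positivity)
        rw [one_div] at hpow; exact hpow
    _ = 2 * D := by rw [Real.rpow_rpow_inv (by linarith) hp0.ne']

/-- Gluing maps `f_m` that are `1`-Lipschitz for `d_p` and satisfy `‖f_m(ε)‖ ≤ |ε|^{1/p}`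
by convex combinations along dyadic scales produces a `9`-Lipschitz map for `d_p`. -/
theorem glued_map_nine_lipschitz_dp
    {X : Type*} [NormedAddCommGroup X] [NormedSpace ℝ X]
    (p : ℝ) (hp : 1 ≤ p)
    (fm : ℕ → List Bool → X)
    (hlip : ∀ m (ε ε' : List Bool), ‖fm m ε - fm m ε'‖ ≤ dp p ε ε')
    (hbound : ∀ m (ε : List Bool), ‖fm m ε‖ ≤ (ε.length : ℝ) ^ (1 / p))
    (f : List Bool → X) (hf0 : f [] = 0)
    (hf : ∀ m (ε : List Bool), 2 ^ m ≤ ε.length → ε.length < 2 ^ (m + 1) →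
      f ε = (((2 : ℝ) ^ (m + 1) - ε.length) / 2 ^ m) • fm m ε +
        (1 - ((2 : ℝ) ^ (m + 1) - ε.length) / 2 ^ m) • fm (m + 1) ε) :
    ∀ ε ε' : List Bool, ‖f ε - f ε'‖ ≤ 9 * dp p ε ε' := by
  have hp0 : (0:ℝ) < p := lt_of_lt_of_le one_pos hp
  have h1p : (0:ℝ) < 1/p := by positivity
  have h1p1 : 1/p ≤ 1 := by rw [div_le_one hp0]; exact hp
  -- norm bound for f
  have hfn : ∀ ε : List Bool, ‖f ε‖ ≤ (ε.length : ℝ) ^ (1/p) := by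
    intro ε
    rcases Nat.eq_zero_or_pos ε.length with h0 | h0
    · rw [List.length_eq_zero_iff.mp h0, hf0, norm_zero]
      exact Real.rpow_nonneg (by positivity) _
    · set m := Nat.log 2 ε.length with hm
      have h1 : 2 ^ m ≤ ε.length := Nat.pow_log_le_self 2 h0.ne'
      have h2 : ε.length < 2 ^ (m + 1) := Nat.lt_pow_succ_log_self (by norm_num) _
      have hc1 : (2:ℝ)^m ≤ (ε.length:ℝ) := by exact_mod_cast h1
      have hc2 : ((ε.length:ℝ)) < 2^(m+1) := by exact_mod_cast h2
      have h2m : (0:ℝ) < 2^m := by positivity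
      rw [hf m ε h1 h2]
      set lam : ℝ := ((2:ℝ) ^ (m+1) - ε.length) / 2 ^ m with hlam
      have hl0 : 0 ≤ lam := div_nonneg (by linarith) h2m.le
      have hl1 : lam ≤ 1 := by
        rw [hlam, div_le_one h2m]
        have : (2:ℝ)^(m+1) = 2*2^m := by ring
        linarith
      calc ‖lam • fm m ε + (1-lam) • fm (m+1) ε‖
          ≤ ‖lam • fm m ε‖ + ‖(1-lam) • fm (m+1) ε‖ := norm_add_le _ _
        _ = lam * ‖fm m ε‖ + (1-lam) * ‖fm (m+1) ε‖ := by
            rw [norm_smul, norm_smul, Real.norm_eq_abs, Real.norm_eq_abs,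
              abs_of_nonneg hl0, abs_of_nonneg (by linarith)]
        _ ≤ lam * (ε.length:ℝ)^(1/p) + (1-lam) * (ε.length:ℝ)^(1/p) := by
            gcongr
            · exact hbound m ε
            · exact hbound (m+1) ε
        _ = (ε.length:ℝ)^(1/p) := by ring
  -- the main one-sided claim
  have main : ∀ ε ε' : List Bool, ε.length ≤ ε'.length → ‖f ε - f ε'‖ ≤ 9 * dp p ε ε' := by
    intro ε ε' hab
    have hD0 : 0 ≤ dp p ε ε' := dp_nonneg' p ε ε'
    set D := dp p ε ε' with hDdef
    rcases Nat.eq_zero_or_pos ε.length with ha | ha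
    · obtain rfl : ε = [] := List.length_eq_zero_iff.mp ha
      rw [hf0, zero_sub, norm_neg]
      have hΔ : ((ε'.length : ℝ) - ([] : List Bool).length) ≤ D ^ p :=
        dp_length_le' p hp [] ε' (by simp)
      simp only [List.length_nil, Nat.cast_zero, sub_zero] at hΔ
      calc ‖f ε'‖ ≤ (ε'.length:ℝ)^(1/p) := hfn ε'
        _ ≤ (D^p)^(1/p) := Real.rpow_le_rpow (by positivity) hΔ h1p.le
        _ = D := by rw [one_div, Real.rpow_rpow_inv hD0 hp0.ne']
        _ ≤ 9 * D := by linarith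
    · have hb : 0 < ε'.length := lt_of_lt_of_le ha hab
      set m := Nat.log 2 ε.length with hm
      set m' := Nat.log 2 ε'.length with hm'
      have hA1 : 2 ^ m ≤ ε.length := Nat.pow_log_le_self 2 ha.ne'
      have hA2 : ε.length < 2 ^ (m + 1) := Nat.lt_pow_succ_log_self (by norm_num) _
      have hB1 : 2 ^ m' ≤ ε'.length := Nat.pow_log_le_self 2 hb.ne'
      have hB2 : ε'.length < 2 ^ (m' + 1) := Nat.lt_pow_succ_log_self (by norm_num) _
      have hmm : m ≤ m' := Nat.log_mono_right hab
      have hΔ : ((ε'.length : ℝ) - ε.length) ≤ D ^ p := dp_length_le' p hp ε ε' hab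
      have ca1 : (2:ℝ)^m ≤ (ε.length:ℝ) := by exact_mod_cast hA1
      have ca2 : ((ε.length:ℝ)) < 2^(m+1) := by exact_mod_cast hA2
      have cb1 : (2:ℝ)^m' ≤ (ε'.length:ℝ) := by exact_mod_cast hB1
      have cb2 : ((ε'.length:ℝ)) < 2^(m'+1) := by exact_mod_cast hB2
      have h2m : (0:ℝ) < 2^m := by positivity
      have h2m1 : (0:ℝ) < 2^(m+1) := by positivity
      rcases Nat.lt_or_ge m' (m+2) with hlt | hge
      · have hmeq : m' = m ∨ m' = m + 1 := by omega
        rcases hmeq with hmeq | hmeq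
        · -- same block
          rw [hmeq] at hB1 hB2 cb1 cb2
          have hfε := hf m ε hA1 hA2
          have hfε' := hf m ε' hB1 hB2
          set lam : ℝ := ((2:ℝ)^(m+1) - ε.length)/2^m with hlam
          set lam' : ℝ := ((2:ℝ)^(m+1) - ε'.length)/2^m with hlam'
          have hid : f ε - f ε' = lam • (fm m ε - fm m ε')
              + (1-lam) • (fm (m+1) ε - fm (m+1) ε')
              + (lam - lam') • (fm m ε' - fm (m+1) ε') := by
            rw [hfε, hfε']; module
          have h2e : (2:ℝ)^(m+1) = 2*2^m := by ring
          have hl0 : 0 ≤ lam := div_nonneg (by linarith) h2m.le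
          have hl1 : lam ≤ 1 := by rw [hlam, div_le_one h2m]; linarith
          have hl'0 : 0 ≤ lam' := div_nonneg (by linarith) h2m.le
          have hcast : (ε.length:ℝ) ≤ (ε'.length:ℝ) := by exact_mod_cast hab
          have hdiff : lam - lam' = ((ε'.length:ℝ) - ε.length)/2^m := by
            rw [hlam, hlam']; ring
          have ht0 : 0 ≤ lam - lam' := by
            rw [hdiff]; exact div_nonneg (by linarith) h2m.le
          have ht1 : lam - lam' ≤ 1 := by linarith
          have htA : (lam - lam') * 2^m ≤ D^p := by
            rw [hdiff, div_mul_cancel₀ _ h2m.ne']; exact hΔ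
          have hkey : (lam - lam') * (2*2^m)^(1/p) ≤ 2*D :=
            key_min' p (2^m) D (lam - lam') hp h2m hD0 ht0 ht1 htA
          have n3 : ‖fm m ε' - fm (m+1) ε'‖ ≤ 2 * (2*2^m)^(1/p) := by
            have hb' : (ε'.length:ℝ)^(1/p) ≤ (2*2^m)^(1/p) :=
              Real.rpow_le_rpow (by positivity) (by linarith) h1p.le
            calc ‖fm m ε' - fm (m+1) ε'‖ ≤ ‖fm m ε'‖ + ‖fm (m+1) ε'‖ := norm_sub_le _ _
              _ ≤ 2 * (2*2^m)^(1/p) := by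
                  linarith [hbound m ε', hbound (m+1) ε']
          rw [hid]
          have hD1 : lam * D + (1-lam) * D = D := by ring
          have hC : (lam - lam') * (2*(2*2^m)^(1/p)) = 2*((lam - lam')*(2*2^m)^(1/p)) := by
            ring
          calc ‖lam • (fm m ε - fm m ε') + (1-lam) • (fm (m+1) ε - fm (m+1) ε')
              + (lam - lam') • (fm m ε' - fm (m+1) ε')‖
              ≤ ‖lam • (fm m ε - fm m ε')‖ + ‖(1-lam) • (fm (m+1) ε - fm (m+1) ε')‖
                + ‖(lam - lam') • (fm m ε' - fm (m+1) ε')‖ := norm_add₃_le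
            _ = lam * ‖fm m ε - fm m ε'‖ + (1-lam) * ‖fm (m+1) ε - fm (m+1) ε'‖
                + (lam - lam') * ‖fm m ε' - fm (m+1) ε'‖ := by
                rw [norm_smul, norm_smul, norm_smul, Real.norm_eq_abs, Real.norm_eq_abs,
                  Real.norm_eq_abs, abs_of_nonneg hl0, abs_of_nonneg (by linarith),
                  abs_of_nonneg ht0]
            _ ≤ lam * D + (1-lam) * D + (lam - lam') * (2*(2*2^m)^(1/p)) := by
                gcongr <;> first
                  | exact hlip m ε ε'
                  | exact hlip (m+1) ε ε'
                  | exact n3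
                  | linarith
            _ ≤ 9 * D := by rw [hC]; linarith
        · -- adjacent blocks
          rw [hmeq] at hB1 hB2 cb1 cb2
          have hfε := hf m ε hA1 hA2
          have hfε' := hf (m+1) ε' hB1 hB2
          set lam : ℝ := ((2:ℝ)^(m+1) - ε.length)/2^m with hlam
          set mu : ℝ := ((2:ℝ)^(m+1+1) - ε'.length)/2^(m+1) with hmu
          have hid : f ε - f ε' = lam • (fm m ε - fm (m+1) ε)
              + (fm (m+1) ε - fm (m+1) ε')
              + (1-mu) • (fm (m+1) ε' - fm (m+1+1) ε') := by
            rw [hfε, hfε']; module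
          have h2e : (2:ℝ)^(m+1) = 2*2^m := by ring
          have h2e2 : (2:ℝ)^(m+1+1) = 2*2^(m+1) := by ring
          have hcast : (ε.length:ℝ) ≤ (ε'.length:ℝ) := by exact_mod_cast hab
          have hl0 : 0 ≤ lam := div_nonneg (by linarith) h2m.le
          have hl1 : lam ≤ 1 := by rw [hlam, div_le_one h2m]; linarith
          have hm0 : 0 ≤ mu := div_nonneg (by linarith) h2m1.le
          have hm1 : mu ≤ 1 := by rw [hmu, div_le_one h2m1]; linarith
          -- first glued term
          have htA : lam * 2^m ≤ D^p := by
            rw [hlam, div_mul_cancel₀ _ h2m.ne']; linarith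
          have hkey1 : lam * (2*2^m)^(1/p) ≤ 2*D :=
            key_min' p (2^m) D lam hp h2m hD0 hl0 hl1 htA
          have n1 : ‖fm m ε - fm (m+1) ε‖ ≤ 2 * (2*2^m)^(1/p) := by
            have ha' : (ε.length:ℝ)^(1/p) ≤ (2*2^m)^(1/p) :=
              Real.rpow_le_rpow (by positivity) (by linarith) h1p.le
            calc ‖fm m ε - fm (m+1) ε‖ ≤ ‖fm m ε‖ + ‖fm (m+1) ε‖ := norm_sub_le _ _
              _ ≤ 2 * (2*2^m)^(1/p) := by linarith [hbound m ε, hbound (m+1) ε]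
          -- third glued term
          have htB : (1-mu) * 2^(m+1) ≤ D^p := by
            have : (1-mu) * 2^(m+1) = (ε'.length:ℝ) - 2^(m+1) := by
              rw [hmu]; field_simp; ring
            rw [this]; linarith
          have hkey3 : (1-mu) * (2*2^(m+1))^(1/p) ≤ 2*D :=
            key_min' p (2^(m+1)) D (1-mu) hp h2m1 hD0 (by linarith) (by linarith) htB
          have n3 : ‖fm (m+1) ε' - fm (m+1+1) ε'‖ ≤ 2 * (2*2^(m+1))^(1/p) := by
            have hb' : (ε'.length:ℝ)^(1/p) ≤ (2*2^(m+1))^(1/p) :=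
              Real.rpow_le_rpow (by positivity) (by linarith) h1p.le
            calc ‖fm (m+1) ε' - fm (m+1+1) ε'‖ ≤ ‖fm (m+1) ε'‖ + ‖fm (m+1+1) ε'‖ :=
                norm_sub_le _ _
              _ ≤ 2 * (2*2^(m+1))^(1/p) := by
                  linarith [hbound (m+1) ε', hbound (m+1+1) ε']
          rw [hid]
          have e1 : lam * (2*(2*2^m)^(1/p)) = 2*(lam*(2*2^m)^(1/p)) := by ring
          have e3 : (1-mu) * (2*(2*2^(m+1))^(1/p)) = 2*((1-mu)*(2*2^(m+1))^(1/p)) := by ring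
          calc ‖lam • (fm m ε - fm (m+1) ε) + (fm (m+1) ε - fm (m+1) ε')
              + (1-mu) • (fm (m+1) ε' - fm (m+1+1) ε')‖
              ≤ ‖lam • (fm m ε - fm (m+1) ε)‖ + ‖fm (m+1) ε - fm (m+1) ε'‖
                + ‖(1-mu) • (fm (m+1) ε' - fm (m+1+1) ε')‖ := norm_add₃_le
            _ = lam * ‖fm m ε - fm (m+1) ε‖ + ‖fm (m+1) ε - fm (m+1) ε'‖
                + (1-mu) * ‖fm (m+1) ε' - fm (m+1+1) ε'‖ := by
                rw [norm_smul, norm_smul, Real.norm_eq_abs, Real.norm_eq_abs,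
                  abs_of_nonneg hl0, abs_of_nonneg (by linarith)]
            _ ≤ lam * (2*(2*2^m)^(1/p)) + D + (1-mu) * (2*(2*2^(m+1))^(1/p)) := by
                gcongr <;> first
                  | exact n1
                  | exact hlip (m+1) ε ε'
                  | exact n3
                  | linarith
            _ ≤ 9 * D := by rw [e1, e3]; linarith
      · -- far-apart blocks
        have hpow12 : (2:ℕ)^(m+1) ≤ 2^(m'-1) := Nat.pow_le_pow_right (by norm_num) (by omega)
        have cpow12 : (2:ℝ)^(m+1) ≤ (2:ℝ)^(m'-1) := by exact_mod_cast hpow12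
        have e : (2:ℝ)^m' = 2 * 2^(m'-1) := by
          rw [← pow_succ']; congr 1; omega
        have e2 : (2:ℝ)^(m'+1) = 4 * 2^(m'-1) := by
          rw [show (4:ℝ) = 2^2 by norm_num, ← pow_add]; congr 1; omega
        have hsub : (2:ℝ)^(m'-1) ≤ D^p := by
          have : (2:ℝ)^(m'-1) ≤ (ε'.length:ℝ) - ε.length := by
            rw [e] at cb1; linarith
          linarith
        have hDge : ((2:ℝ)^(m'-1))^(1/p) ≤ D := by
          calc ((2:ℝ)^(m'-1))^(1/p) ≤ (D^p)^(1/p) :=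
              Real.rpow_le_rpow (by positivity) hsub h1p.le
            _ = D := by rw [one_div, Real.rpow_rpow_inv hD0 hp0.ne']
        have hfa : ‖f ε‖ ≤ D := by
          calc ‖f ε‖ ≤ (ε.length:ℝ)^(1/p) := hfn ε
            _ ≤ ((2:ℝ)^(m'-1))^(1/p) :=
                Real.rpow_le_rpow (by positivity) (by linarith) h1p.le
            _ ≤ D := hDge
        have hfb : ‖f ε'‖ ≤ 4 * D := by
          have h4 : (4:ℝ)^(1/p) ≤ 4 := by
            calc (4:ℝ)^(1/p) ≤ 4^(1:ℝ) :=
                Real.rpow_le_rpow_of_exponent_le (by norm_num) h1p1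
              _ = 4 := Real.rpow_one 4
          calc ‖f ε'‖ ≤ (ε'.length:ℝ)^(1/p) := hfn ε'
            _ ≤ ((2:ℝ)^(m'+1))^(1/p) :=
                Real.rpow_le_rpow (by positivity) (by linarith) h1p.le
            _ = (4:ℝ)^(1/p) * ((2:ℝ)^(m'-1))^(1/p) := by
                rw [e2, Real.mul_rpow (by norm_num) (by positivity)]
            _ ≤ 4 * D := by
                apply mul_le_mul h4 hDge (by positivity) (by norm_num)
        calc ‖f ε - f ε'‖ ≤ ‖f ε‖ + ‖f ε'‖ := norm_sub_le _ _
          _ ≤ D + 4 * D := by linarith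
          _ ≤ 9 * D := by linarith
  intro ε ε'
  rcases le_total ε.length ε'.length with h | h
  · exact main ε ε' h
  · rw [norm_sub_rev, dp_symm' p ε ε']
    exact main ε' ε h
end

section
/- Let Z be a Banach space with coordinate projections Π_m (onto the m-th factor F_m of a Schauder finite dimensional decomposition) of norm at most 4, and for each m let R_m : ℓ_p^m → F_m be a linear isomorphism with (1/2)‖u‖ ≤ ‖R_m u‖ ≤ ‖u‖ for all u ∈ ℓ_p^m. Set f_m(ε) = R_m(φ_m(ε)) for ε ∈ T_m, where φ_m is the canonical isometric embedding of (T_m, d_p) into ℓ_p^m, and define f : T → Z by f(ε) = λ f_m(ε) + (1-λ) f_{m+1}(ε) for 2^m ≤ |ε| < 2^{m+1}, λ = (2^{m+1}-|ε|)/2^m. Then for ε, ε' ∈ T with 2^m ≤ |ε|, |ε'| < 2^{m+1}, one has d_p(ε,ε') ≤ 16 ‖f(ε) - f(ε')‖. -/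
/-- Lower bound for the glued embedding via the coordinate projections of the Schauder
decomposition: with `Π_m` of norm at most `4`, `R_m : ℓ_p^{d_m} → F_m` (with
`2^{m+1} ≤ d_m`, so that `T_{2^{m+1}} ⊆ ℓ_p^{d_m}`) satisfying
`(1/2)‖u‖_p ≤ ‖R_m u‖ ≤ ‖u‖_p`, `Π_m ∘ R_k = 0` for `k ≠ m` and `Π_m ∘ R_m = R_m`,
and `f_m = R_m ∘ φ_{d_m}`, the glued map `f` satisfies
`d_p(ε,ε') ≤ 16 ‖f(ε) - f(ε')‖` whenever `2^m ≤ |ε|, |ε'| < 2^{m+1}`. -/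
theorem glued_map_lower_bound
    {Z : Type*} [NormedAddCommGroup Z] [NormedSpace ℝ Z]
    (p : ℝ) (hp : 1 ≤ p)
    (d : ℕ → ℕ) (hd : ∀ m, 2 ^ (m + 1) ≤ d m)
    (Pi : ℕ → Z →L[ℝ] Z) (hPi : ∀ m, ‖Pi m‖ ≤ 4)
    (R : (m : ℕ) → (Fin (d m) → ℝ) →ₗ[ℝ] Z)
    (hR : ∀ m (u : Fin (d m) → ℝ),
      (1 / 2) * (∑ i, |u i| ^ p) ^ (1 / p) ≤ ‖R m u‖ ∧
        ‖R m u‖ ≤ (∑ i, |u i| ^ p) ^ (1 / p))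
    (hproj : ∀ m k (u : Fin (d k) → ℝ),
      Pi m (R k u) = if k = m then R k u else 0)
    (f : List Bool → Z)
    (hf : ∀ m (ε : List Bool), 2 ^ m ≤ ε.length → ε.length < 2 ^ (m + 1) →
      f ε = (((2 : ℝ) ^ (m + 1) - ε.length) / 2 ^ m) • R m (fun i => coord ε i) +
        (1 - ((2 : ℝ) ^ (m + 1) - ε.length) / 2 ^ m) • R (m + 1) (fun i => coord ε i)) :
    ∀ (m : ℕ) (ε ε' : List Bool),
      2 ^ m ≤ ε.length → ε.length < 2 ^ (m + 1) →
      2 ^ m ≤ ε'.length → ε'.length < 2 ^ (m + 1) →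
      dp p ε ε' ≤ 16 * ‖f ε - f ε'‖ := by
  intro m ε ε' h1 h2 h1' h2'
  have hp0 : p ≠ 0 := by positivity
  set lam : ℝ := ((2 : ℝ) ^ (m + 1) - ε.length) / 2 ^ m with hlam
  set lam' : ℝ := ((2 : ℝ) ^ (m + 1) - ε'.length) / 2 ^ m with hlam'
  set M := max ε.length ε'.length with hM
  -- coordinate functions on ℕ
  set a : ℕ → ℝ := fun i => lam * coord ε i - lam' * coord ε' i with ha
  set b : ℕ → ℝ := fun i => (1 - lam) * coord ε i - (1 - lam') * coord ε' i with hb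
  have hcoordz : ∀ (η : List Bool) i, η.length ≤ i → coord η i = 0 := by
    intro η i h
    simp [coord, Nat.not_lt.mpr h]
  have haz : ∀ i, M ≤ i → a i = 0 := by
    intro i hi
    simp [ha, hcoordz ε i (le_trans (le_max_left _ _) hi),
      hcoordz ε' i (le_trans (le_max_right _ _) hi)]
  have hbz : ∀ i, M ≤ i → b i = 0 := by
    intro i hi
    simp [hb, hcoordz ε i (le_trans (le_max_left _ _) hi),
      hcoordz ε' i (le_trans (le_max_right _ _) hi)]
  have hMdm : M ≤ d m := le_trans (max_le (le_of_lt h2) (le_of_lt h2')) (hd m)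
  have hMdm1 : M ≤ d (m + 1) :=
    le_trans (max_le (le_of_lt h2) (le_of_lt h2'))
      (le_trans (Nat.pow_le_pow_right (by norm_num) (Nat.le_succ _)) (hd (m + 1)))
  -- vectors
  set A : Fin (d m) → ℝ := fun i => a i with hA
  set B : Fin (d (m + 1)) → ℝ := fun i => b i with hB
  have hfe := hf m ε h1 h2
  have hfe' := hf m ε' h1' h2'
  -- R m A equals Pi m applied to the difference
  have hAeq : A = lam • (fun i : Fin (d m) => coord ε i)
      - lam' • (fun i : Fin (d m) => coord ε' i) := by
    funext i; simp [hA, ha]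
  have hBeq : B = (1 - lam) • (fun i : Fin (d (m+1)) => coord ε i)
      - (1 - lam') • (fun i : Fin (d (m+1)) => coord ε' i) := by
    funext i; simp [hB, hb]
  have hRA : R m A = Pi m (f ε - f ε') := by
    rw [map_sub, hfe, hfe', map_add, map_add, map_smul, map_smul, map_smul, map_smul,
      hAeq, map_sub, map_smul, map_smul]
    simp [hproj]
    rfl
  have hRB : R (m + 1) B = Pi (m + 1) (f ε - f ε') := by
    rw [map_sub, hfe, hfe', map_add, map_add, map_smul, map_smul, map_smul, map_smul,
      hBeq, map_sub, map_smul, map_smul]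
    simp [hproj]
    rfl
  set Δ : ℝ := ‖f ε - f ε'‖ with hΔ
  have hPibound : ∀ k, ‖Pi k (f ε - f ε')‖ ≤ 4 * Δ := fun k =>
    le_trans ((Pi k).le_opNorm _) (mul_le_mul_of_nonneg_right (hPi k) (norm_nonneg _))
  -- sums over range M
  have hsumA : ∑ i : Fin (d m), |A i| ^ p = ∑ i ∈ Finset.range M, |a i| ^ p := by
    rw [Fin.sum_univ_eq_sum_range (fun i => |a i| ^ p)]
    exact (Finset.sum_subset (Finset.range_subset_range.mpr hMdm) (by
      intro i _ hi
      rw [haz i (Nat.le_of_not_lt (by simpa using hi))]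
      simp [Real.zero_rpow hp0])).symm
  have hsumB : ∑ i : Fin (d (m+1)), |B i| ^ p = ∑ i ∈ Finset.range M, |b i| ^ p := by
    rw [Fin.sum_univ_eq_sum_range (fun i => |b i| ^ p)]
    exact (Finset.sum_subset (Finset.range_subset_range.mpr hMdm1) (by
      intro i _ hi
      rw [hbz i (Nat.le_of_not_lt (by simpa using hi))]
      simp [Real.zero_rpow hp0])).symm
  have hAbound : (∑ i ∈ Finset.range M, |a i| ^ p) ^ (1 / p) ≤ 8 * Δ := by
    have h1 := (hR m A).1
    rw [hsumA] at h1
    have h2 : ‖R m A‖ ≤ 4 * Δ := hRA ▸ hPibound m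
    linarith
  have hBbound : (∑ i ∈ Finset.range M, |b i| ^ p) ^ (1 / p) ≤ 8 * Δ := by
    have h1 := (hR (m+1) B).1
    rw [hsumB] at h1
    have h2 : ‖R (m+1) B‖ ≤ 4 * Δ := hRB ▸ hPibound (m+1)
    linarith
  have hkey : dp p ε ε' ≤ (∑ i ∈ Finset.range M, |a i| ^ p) ^ (1 / p)
      + (∑ i ∈ Finset.range M, |b i| ^ p) ^ (1 / p) := by
    have : ∀ i, coord ε i - coord ε' i = a i + b i := by
      intro i; simp [ha, hb]; ring
    rw [dp]
    simp_rw [this]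
    exact Real.Lp_add_le (Finset.range M) a b hp
  calc dp p ε ε' ≤ _ + _ := hkey
    _ ≤ 8 * Δ + 8 * Δ := add_le_add hAbound hBbound
    _ = 16 * Δ := by ring
end
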